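/- The action of Sp₂(H) on Sp₂⁺(H) given by (g, a) ↦ g a g* is well defined (i.e. g a g* ∈ Sp₂⁺(H)) and transitive: for any X, Y ∈ Sp₂⁺(H), writing X = e^x, Y = e^y with x, y ∈ sp₂(H)_h, the element g = e^{x/2} e^{-y/2} ∈ Sp₂(H) satisfies X = g Y g*. -/

import Mathlib

open scoped RealInnerProductSpace
open ContinuousLinearMap

noncomputable section

variable {ι H : Type*} [NormedAddCommGroup H] [InnerProductSpace ℝ H] [CompleteSpace H]

/-- `x` is a Hilbert-Schmidt operator (with respect to the Hilbert basis `b`). -/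
def IsHS (b : HilbertBasis ι ℝ H) (x : H →L[ℝ] H) : Prop :=
  Summable fun i => ‖x (b i)‖ ^ 2

/-- The Hilbert-Schmidt norm `‖x‖₂`. -/
def hsNorm (b : HilbertBasis ι ℝ H) (x : H →L[ℝ] H) : ℝ :=
  Real.sqrt (∑' i, ‖x (b i)‖ ^ 2)

/-- The trace inner product `⟨x, y⟩ = Tr (y* x)`. -/
def hsInner (b : HilbertBasis ι ℝ H) (x y : H →L[ℝ] H) : ℝ :=
  ∑' i, ⟪x (b i), y (b i)⟫

/-- `J` is a complex structure: `J² = -1` and `J* = -J`. -/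
def IsCplxStruct (J : H →L[ℝ] H) : Prop :=
  J * J = -1 ∧ star J = -J

/-- The symplectic group `Sp(H)`. -/
def Sp (J : H →L[ℝ] H) : Set (H →L[ℝ] H) :=
  {g | IsUnit g ∧ star g * J * g = J}

/-- The restricted symplectic group `Sp₂(H)`. -/
def Sp2 (b : HilbertBasis ι ℝ H) (J : H →L[ℝ] H) : Set (H →L[ℝ] H) :=
  {g | g ∈ Sp J ∧ IsHS b (g - 1)}

/-- The Banach-Lie algebra `sp₂(H) = {x ∈ B₂(H) : xJ = -Jx*}`. -/
def sp2 (b : HilbertBasis ι ℝ H) (J : H →L[ℝ] H) : Set (H →L[ℝ] H) :=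
  {x | IsHS b x ∧ x * J = -(J * star x)}

/-- The Hermitian part of `sp₂(H)`. -/
def sp2h (b : HilbertBasis ι ℝ H) (J : H →L[ℝ] H) : Set (H →L[ℝ] H) :=
  {x ∈ sp2 b J | IsSelfAdjoint x}

/-- The anti-Hermitian part of `sp₂(H)`. -/
def sp2ah (b : HilbertBasis ι ℝ H) (J : H →L[ℝ] H) : Set (H →L[ℝ] H) :=
  {x ∈ sp2 b J | star x = -x}

/-- The positive part `Sp₂⁺(H)` of the restricted symplectic group. -/
def Sp2pos (b : HilbertBasis ι ℝ H) (J : H →L[ℝ] H) : Set (H →L[ℝ] H) :=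
  {g ∈ Sp2 b J | g.IsPositive}

/-- The restricted unitary group `U₂(H_J)` of unitaries commuting with `J` which are
Hilbert-Schmidt perturbations of the identity. -/
def U2J (b : HilbertBasis ι ℝ H) (J : H →L[ℝ] H) : Set (H →L[ℝ] H) :=
  {u | star u * u = 1 ∧ u * star u = 1 ∧ u * J = J * u ∧ IsHS b (u - 1)}

open scoped Classical in
/-- The positive square root `a^{1/2}` of a positive operator (junk value otherwise). -/
def psqrt (a : H →L[ℝ] H) : H →L[ℝ] H :=
  if h : ∃ s : H →L[ℝ] H, s.IsPositive ∧ s * s = a then h.choose else 0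

/-- A piecewise smooth curve parametrized on `[0,1]`. -/
def PiecewiseSmooth (α : ℝ → (H →L[ℝ] H)) : Prop :=
  ContinuousOn α (Set.Icc 0 1) ∧ ∃ n : ℕ, ∃ t : Fin (n + 1) → ℝ,
    StrictMono t ∧ t 0 = 0 ∧ t (Fin.last n) = 1 ∧
    ∀ i : Fin n, ContDiffOn ℝ 1 α (Set.Icc (t i.castSucc) (t i.succ))

/-- Length of a curve with respect to a metric `F` on tangent vectors. -/
def lengthWith (F : (H →L[ℝ] H) → (H →L[ℝ] H) → ℝ) (α : ℝ → (H →L[ℝ] H)) : ℝ :=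
  ∫ t in (0:ℝ)..1, F (α t) (deriv α t)

/-- Piecewise smooth curves inside `S` joining `p` to `q`. -/
def pathsIn (S : Set (H →L[ℝ] H)) (p q : H →L[ℝ] H) : Set (ℝ → (H →L[ℝ] H)) :=
  {α | PiecewiseSmooth α ∧ (∀ t ∈ Set.Icc (0:ℝ) 1, α t ∈ S) ∧ α 0 = p ∧ α 1 = q}

/-- The geodesic distance in `S` associated to the metric `F`. -/
def gdist (S : Set (H →L[ℝ] H)) (F : (H →L[ℝ] H) → (H →L[ℝ] H) → ℝ)
    (p q : H →L[ℝ] H) : ℝ :=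
  sInf (lengthWith F '' pathsIn S p q)

/-- The left invariant metric `I(g,v) = ‖g⁻¹ v‖₂`. -/
def leftMet (b : HilbertBasis ι ℝ H) : (H →L[ℝ] H) → (H →L[ℝ] H) → ℝ :=
  fun g v => hsNorm b (Ring.inverse g * v)

/-- The metric of positive operators `𝔭(a,x) = ‖a^{-1/2} x a^{-1/2}‖₂`. -/
def posMet (b : HilbertBasis ι ℝ H) : (H →L[ℝ] H) → (H →L[ℝ] H) → ℝ :=
  fun a x => hsNorm b (Ring.inverse (psqrt a) * x * Ring.inverse (psqrt a))

/-- The ambient metric `𝔭_amb(g,x) = ‖x‖₂`. -/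
def ambMet (b : HilbertBasis ι ℝ H) : (H →L[ℝ] H) → (H →L[ℝ] H) → ℝ :=
  fun _ x => hsNorm b x



set_option maxHeartbeats 1000000
set_option synthInstance.maxHeartbeats 400000

section Aux

open NormedSpace

lemma IsHS.aux_add {b : HilbertBasis ι ℝ H} {x y : H →L[ℝ] H}
    (hx : IsHS b x) (hy : IsHS b y) : IsHS b (x + y) := by
  refine Summable.of_nonneg_of_le (fun i => sq_nonneg _) (fun i => ?_)
    ((hx.add hy).mul_left 2)
  have h := norm_add_le (x (b i)) (y (b i))
  have he : (x + y) (b i) = x (b i) + y (b i) := rfl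
  rw [he]
  nlinarith [norm_nonneg (x (b i)), norm_nonneg (y (b i)),
    norm_nonneg (x (b i) + y (b i)), sq_nonneg (‖x (b i)‖ - ‖y (b i)‖)]

lemma IsHS.aux_lmul {b : HilbertBasis ι ℝ H} {x : H →L[ℝ] H}
    (hx : IsHS b x) (g : H →L[ℝ] H) : IsHS b (g * x) := by
  refine Summable.of_nonneg_of_le (fun i => sq_nonneg _) (fun i => ?_)
    (hx.mul_left (‖g‖ ^ 2))
  have h : ‖(g * x) (b i)‖ ≤ ‖g‖ * ‖x (b i)‖ := by
    rw [ContinuousLinearMap.mul_apply]; exact g.le_opNorm _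
  nlinarith [norm_nonneg ((g * x) (b i)), norm_nonneg g, norm_nonneg (x (b i))]

lemma aux_hasSum_sq_inner (b : HilbertBasis ι ℝ H) (v : H) :
    HasSum (fun j => ⟪v, b j⟫ ^ 2) (‖v‖ ^ 2) := by
  have h := b.hasSum_inner_mul_inner v v
  have h2 : (fun i => (⟪v, b i⟫ : ℝ) * ⟪b i, v⟫) = fun i => ⟪v, b i⟫ ^ 2 := by
    funext i; rw [real_inner_comm (b i) v, sq]
  rw [h2, real_inner_self_eq_norm_sq] at h
  exact h

lemma IsHS.aux_star {b : HilbertBasis ι ℝ H} {x : H →L[ℝ] H} (hx : IsHS b x) :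
    IsHS b (star x) := by
  have hF : Summable fun p : ι × ι => ⟪x (b p.1), b p.2⟫ ^ 2 := by
    refine (summable_prod_of_nonneg (fun p => sq_nonneg _)).2
      ⟨fun i => (aux_hasSum_sq_inner b (x (b i))).summable, ?_⟩
    have : (fun i => ∑' j, ⟪x (b i), b j⟫ ^ 2) = fun i => ‖x (b i)‖ ^ 2 := by
      funext i; exact (aux_hasSum_sq_inner b (x (b i))).tsum_eq
    rw [this]; exact hx
  have hGF : (fun p : ι × ι => ⟪(star x) (b p.1), b p.2⟫ ^ 2)
      = (fun p : ι × ι => ⟪x (b p.1), b p.2⟫ ^ 2) ∘ ⇑(Equiv.prodComm ι ι) := by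
    funext p
    simp only [Function.comp_apply, Equiv.prodComm_apply, Prod.fst_swap, Prod.snd_swap]
    rw [ContinuousLinearMap.star_eq_adjoint, ContinuousLinearMap.adjoint_inner_left,
      real_inner_comm]
  have hG : Summable fun p : ι × ι => ⟪(star x) (b p.1), b p.2⟫ ^ 2 := by
    rw [hGF]; exact ((Equiv.prodComm ι ι).summable_iff).2 hF
  have h2 := ((summable_prod_of_nonneg (fun p => sq_nonneg _)).1 hG).2
  have : (fun i => ∑' j, ⟪(star x) (b i), b j⟫ ^ 2) = fun i => ‖(star x) (b i)‖ ^ 2 := by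
    funext i; exact (aux_hasSum_sq_inner b ((star x) (b i))).tsum_eq
  rw [this] at h2
  exact h2

lemma IsHS.aux_rmul {b : HilbertBasis ι ℝ H} {x : H →L[ℝ] H}
    (hx : IsHS b x) (g : H →L[ℝ] H) : IsHS b (x * g) := by
  have h := (hx.aux_star.aux_lmul (star g)).aux_star
  rwa [← star_mul, star_star] at h

lemma IsHS.aux_smul {b : HilbertBasis ι ℝ H} {x : H →L[ℝ] H}
    (hx : IsHS b x) (c : ℝ) : IsHS b (c • x) := by
  have h : (fun i => ‖(c • x) (b i)‖ ^ 2) = fun i => c ^ 2 * ‖x (b i)‖ ^ 2 := by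
    funext i
    rw [ContinuousLinearMap.smul_apply, norm_smul, Real.norm_eq_abs, mul_pow, sq_abs]
  unfold IsHS; rw [h]; exact hx.mul_left _

lemma IsHS.aux_neg {b : HilbertBasis ι ℝ H} {x : H →L[ℝ] H}
    (hx : IsHS b x) : IsHS b (-x) := by
  have h : (fun i => ‖(-x) (b i)‖ ^ 2) = fun i => ‖x (b i)‖ ^ 2 := by
    funext i; rw [ContinuousLinearMap.neg_apply, norm_neg]
  unfold IsHS; rw [h]; exact hx

lemma IsHS.aux_exp {b : HilbertBasis ι ℝ H} {a : H →L[ℝ] H} (ha : IsHS b a) :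
    IsHS b (NormedSpace.exp a - 1) := by
  have hpow : ∀ m : ℕ, ‖a ^ m‖ ≤ ‖a‖ ^ m := by
    intro m
    induction m with
    | zero =>
      simpa [pow_zero, ContinuousLinearMap.one_def] using
        (ContinuousLinearMap.norm_id_le (E := H))
    | succ k ih =>
      rw [pow_succ, pow_succ]
      calc ‖a ^ k * a‖ ≤ ‖a ^ k‖ * ‖a‖ := norm_mul_le _ _
        _ ≤ ‖a‖ ^ k * ‖a‖ := mul_le_mul_of_nonneg_right ih (norm_nonneg a)
  have hsum : Summable fun n : ℕ => (((n + 1).factorial : ℝ))⁻¹ • a ^ n := by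
    refine Summable.of_norm_bounded
      (Real.summable_pow_div_factorial ‖a‖) ?_
    intro n
    refine le_trans (ContinuousLinearMap.opNorm_smul_le _ _) ?_
    have h2inv : (((n + 1).factorial : ℝ))⁻¹ ≤ ((n.factorial : ℝ))⁻¹ := by
      refine inv_anti₀ (by positivity) ?_
      exact_mod_cast Nat.factorial_le (Nat.le_succ n)
    calc ‖(((n + 1).factorial : ℝ))⁻¹‖ * ‖a ^ n‖
        ≤ ((n.factorial : ℝ))⁻¹ * ‖a‖ ^ n := by
          rw [Real.norm_eq_abs, abs_of_nonneg (by positivity)]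
          exact mul_le_mul h2inv (hpow n) (norm_nonneg _) (by positivity)
      _ = ‖a‖ ^ n / (n.factorial : ℝ) := by rw [div_eq_inv_mul]
  have hf : Summable fun n : ℕ => ((n.factorial : ℝ))⁻¹ • a ^ n :=
    NormedSpace.expSeries_summable' (𝕂 := ℝ) a
  have key : NormedSpace.exp a - 1 = a * ∑' n : ℕ, (((n + 1).factorial : ℝ))⁻¹ • a ^ n := by
    have e1 : NormedSpace.exp a = ∑' n : ℕ, ((n.factorial : ℝ))⁻¹ • a ^ n := by
      rw [NormedSpace.exp_eq_tsum (𝕂 := ℝ)]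
    rw [e1, Summable.tsum_eq_zero_add hf]
    simp only [pow_zero, Nat.factorial_zero, Nat.cast_one, inv_one, one_smul]
    rw [add_sub_cancel_left]
    rw [← hsum.tsum_mul_left a]
    refine tsum_congr fun n => ?_
    rw [mul_smul_comm, ← pow_succ']
  rw [key]
  exact ha.aux_rmul _

lemma Sp.aux_key {J g : H →L[ℝ] H} (hg : g ∈ Sp J) (t : H →L[ℝ] H) :
    star g * (J * (g * t)) = J * t := by
  calc star g * (J * (g * t)) = (star g * J * g) * t := by simp only [mul_assoc]
    _ = J * t := by rw [hg.2]

lemma Sp.aux_conj_star {J : H →L[ℝ] H} (hJ : IsCplxStruct J) {g : H →L[ℝ] H}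
    (hg : g ∈ Sp J) : g * J * star g = J := by
  obtain ⟨hu, hrel⟩ := hg
  obtain ⟨u, rfl⟩ := hu
  have h1 : star (u : H →L[ℝ] H) * J = J * ↑u⁻¹ := by
    have h := congrArg (fun z => z * (↑u⁻¹ : H →L[ℝ] H)) hrel
    simpa only [mul_assoc, Units.mul_inv, mul_one] using h
  have h2 : star (u : H →L[ℝ] H) = -(J * (↑u⁻¹ * J)) := by
    have h := congrArg (fun z => z * J) h1
    simp only [mul_assoc] at h
    rw [hJ.1] at h
    rw [mul_neg_one] at h
    exact neg_eq_iff_eq_neg.mp h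
  rw [h2]
  calc (u : H →L[ℝ] H) * J * -(J * (↑u⁻¹ * J))
      = -((u : H →L[ℝ] H) * (J * (J * (↑u⁻¹ * J)))) := by
        simp only [mul_neg, mul_assoc]
    _ = -((u : H →L[ℝ] H) * ((J * J) * (↑u⁻¹ * J))) := by rw [← mul_assoc J J]
    _ = (u : H →L[ℝ] H) * (↑u⁻¹ * J) := by
        rw [hJ.1, neg_one_mul, mul_neg, neg_neg]
    _ = J := by rw [← mul_assoc, Units.mul_inv, one_mul]

lemma Sp.aux_mul {J g h : H →L[ℝ] H} (hg : g ∈ Sp J) (hh : h ∈ Sp J) :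
    g * h ∈ Sp J := by
  refine ⟨hg.1.mul hh.1, ?_⟩
  calc star (g * h) * J * (g * h)
      = star h * (star g * (J * (g * h))) := by simp only [star_mul, mul_assoc]
    _ = star h * (J * h) := by rw [Sp.aux_key hg]
    _ = J := by rw [← mul_assoc, hh.2]

lemma aux_exp_mem_Sp {J z : H →L[ℝ] H} (hJ : IsCplxStruct J) (hsa : IsSelfAdjoint z)
    (hzJ : z * J = -(J * z)) : NormedSpace.exp z ∈ Sp J := by
  let +nondep : NormedAlgebra ℚ (H →L[ℝ] H) := .restrictScalars ℚ ℝ (H →L[ℝ] H)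
  refine ⟨NormedSpace.isUnit_exp z, ?_⟩
  have hstar : star (NormedSpace.exp z) = NormedSpace.exp z := by
    rw [NormedSpace.star_exp, hsa.star_eq]
  have hJu : (-J) * J = 1 := by simp [neg_mul, hJ.1]
  have hJu' : J * (-J) = 1 := by simp [mul_neg, hJ.1]
  set Ju : (H →L[ℝ] H)ˣ := ⟨J, -J, hJu', hJu⟩ with hJudef
  have hconj : (Ju : H →L[ℝ] H) * z * ↑Ju⁻¹ = -z := by
    show J * z * (-J) = -z
    have hz : J * z = -(z * J) := by rw [hzJ, neg_neg]
    rw [hz, neg_mul_neg, mul_assoc, hJ.1, mul_neg_one]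
  have hcu : NormedSpace.exp (-z) = J * NormedSpace.exp z * (-J) := by
    rw [← hconj]
    exact NormedSpace.exp_units_conj Ju z
  have hJe : J * NormedSpace.exp z = NormedSpace.exp (-z) * J := by
    have h := congrArg (fun w => w * J) hcu
    simp only [mul_assoc, hJu, mul_one] at h
    rw [h]
  have h5 : NormedSpace.exp z * NormedSpace.exp (-z) = 1 := by
    rw [← NormedSpace.exp_add_of_commute (Commute.neg_right (Commute.refl z)),
      add_neg_cancel, NormedSpace.exp_zero]
  rw [hstar]
  calc NormedSpace.exp z * J * NormedSpace.exp z
      = NormedSpace.exp z * (J * NormedSpace.exp z) := by rw [mul_assoc]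
    _ = NormedSpace.exp z * (NormedSpace.exp (-z) * J) := by rw [hJe]
    _ = (NormedSpace.exp z * NormedSpace.exp (-z)) * J := by rw [mul_assoc]
    _ = J := by rw [h5, one_mul]

end Aux

/-- the action `(g,a) ↦ g a g*` of `Sp₂(H)` on `Sp₂⁺(H)` is well
defined and transitive. -/
theorem action_welldefined_transitive (b : HilbertBasis ι ℝ H) (J : H →L[ℝ] H)
    (hJ : IsCplxStruct J) :
    (∀ g ∈ Sp2 b J, ∀ a ∈ Sp2pos b J, g * a * star g ∈ Sp2pos b J) ∧
    (∀ x ∈ sp2h b J, ∀ y ∈ sp2h b J,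
      NormedSpace.exp ((1/2 : ℝ) • x) * NormedSpace.exp (-((1/2 : ℝ) • y)) ∈ Sp2 b J ∧
      NormedSpace.exp x =
        (NormedSpace.exp ((1/2 : ℝ) • x) * NormedSpace.exp (-((1/2 : ℝ) • y))) *
          NormedSpace.exp y *
          star (NormedSpace.exp ((1/2 : ℝ) • x) * NormedSpace.exp (-((1/2 : ℝ) • y)))) := by
  constructor
  · rintro g ⟨hgSp, hgHS⟩ a ⟨⟨haSp, haHS⟩, hapos⟩
    have hasa : IsSelfAdjoint a := hapos.isSelfAdjoint
    refine ⟨⟨⟨(hgSp.1.mul haSp.1).mul hgSp.1.star, ?_⟩, ?_⟩, ?_⟩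
    · calc star (g * a * star g) * J * (g * a * star g)
          = g * (a * (star g * (J * (g * (a * star g))))) := by
            simp only [star_mul, star_star, hasa.star_eq, mul_assoc]
        _ = g * (a * (J * (a * star g))) := by rw [Sp.aux_key hgSp]
        _ = g * (star a * (J * (a * star g))) := by rw [hasa.star_eq]
        _ = g * (J * star g) := by rw [Sp.aux_key haSp]
        _ = J := by rw [← mul_assoc]; exact Sp.aux_conj_star hJ hgSp
    · have hstarHS : IsHS b (star g - 1) := by
        have h := hgHS.aux_star
        rwa [star_sub, star_one] at h
      have hid : g * a * star g - 1
          = g * (a - 1) * star g + ((g - 1) * star g + (star g - 1)) := by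
        noncomm_ring
      rw [hid]
      exact ((haHS.aux_lmul g).aux_rmul (star g)).aux_add
        ((hgHS.aux_rmul (star g)).aux_add hstarHS)
    · have h := hapos.conj_adjoint g
      have heq : g ∘L a ∘L ContinuousLinearMap.adjoint g = g * a * star g := by
        rw [ContinuousLinearMap.star_eq_adjoint, mul_assoc]; rfl
      rwa [heq] at h
  · rintro x ⟨⟨hxHS, hxJ⟩, hxsa⟩ y ⟨⟨hyHS, hyJ⟩, hysa⟩
    let +nondep : NormedAlgebra ℚ (H →L[ℝ] H) := .restrictScalars ℚ ℝ (H →L[ℝ] H)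
    rw [hxsa.star_eq] at hxJ
    rw [hysa.star_eq] at hyJ
    set x' : H →L[ℝ] H := (1/2 : ℝ) • x with hx'def
    set y' : H →L[ℝ] H := (1/2 : ℝ) • y with hy'def
    have hx'sa : IsSelfAdjoint x' := by
      rw [IsSelfAdjoint, hx'def, star_smul, star_trivial, hxsa.star_eq]
    have hy'sa : IsSelfAdjoint y' := by
      rw [IsSelfAdjoint, hy'def, star_smul, star_trivial, hysa.star_eq]
    have hny'sa : IsSelfAdjoint (-y') := hy'sa.neg
    have hx'J : x' * J = -(J * x') := by
      rw [hx'def, smul_mul_assoc, hxJ, mul_smul_comm, smul_neg]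
    have hy'J : y' * J = -(J * y') := by
      rw [hy'def, smul_mul_assoc, hyJ, mul_smul_comm, smul_neg]
    have hny'J : (-y') * J = -(J * (-y')) := by
      rw [neg_mul, hy'J, neg_neg, mul_neg, neg_neg]
    have hgx : NormedSpace.exp x' ∈ Sp J := aux_exp_mem_Sp hJ hx'sa hx'J
    have hgy : NormedSpace.exp (-y') ∈ Sp J := aux_exp_mem_Sp hJ hny'sa hny'J
    have hx'HS : IsHS b x' := hxHS.aux_smul _
    have hy'HS : IsHS b y' := hyHS.aux_smul _
    have hgHS : IsHS b (NormedSpace.exp x' * NormedSpace.exp (-y') - 1) := by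
      have hid : NormedSpace.exp x' * NormedSpace.exp (-y') - 1
          = NormedSpace.exp x' * (NormedSpace.exp (-y') - 1)
            + (NormedSpace.exp x' - 1) := by noncomm_ring
      rw [hid]
      exact ((hy'HS.aux_neg.aux_exp).aux_lmul _).aux_add hx'HS.aux_exp
    refine ⟨⟨Sp.aux_mul hgx hgy, hgHS⟩, ?_⟩
    have hstar_g : star (NormedSpace.exp x' * NormedSpace.exp (-y'))
        = NormedSpace.exp (-y') * NormedSpace.exp x' := by
      rw [star_mul, NormedSpace.star_exp, NormedSpace.star_exp, hny'sa.star_eq,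
        hx'sa.star_eq]
    rw [hstar_g]
    have hy2 : y' + y' = y := by rw [hy'def, ← add_smul]; norm_num
    have hx2 : x' + x' = x := by rw [hx'def, ← add_smul]; norm_num
    have hcyy : Commute (-y') y := ((Commute.refl y).smul_left (1/2 : ℝ)).neg_left
    have hc2 : Commute (-y' + y) (-y') :=
      (Commute.refl (-y')).add_left hcyy.symm
    have h0 : -y' + y + -y' = (0 : H →L[ℝ] H) := by
      rw [show y = y' + y' from hy2.symm]; abel
    have hmid1 : (NormedSpace.exp (-y') * NormedSpace.exp y) * NormedSpace.exp (-y')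
        = 1 := by
      rw [← NormedSpace.exp_add_of_commute hcyy, ← NormedSpace.exp_add_of_commute hc2,
        h0, NormedSpace.exp_zero]
    have htt : ∀ t : H →L[ℝ] H,
        NormedSpace.exp (-y') * (NormedSpace.exp y * (NormedSpace.exp (-y') * t))
          = t := by
      intro t
      calc NormedSpace.exp (-y') * (NormedSpace.exp y * (NormedSpace.exp (-y') * t))
          = ((NormedSpace.exp (-y') * NormedSpace.exp y) * NormedSpace.exp (-y')) * t := by
            simp only [mul_assoc]
        _ = t := by rw [hmid1, one_mul]
    calc NormedSpace.exp x
        = NormedSpace.exp (x' + x') := by rw [hx2]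
      _ = NormedSpace.exp x' * NormedSpace.exp x' := by
          rw [NormedSpace.exp_add_of_commute (Commute.refl x')]
      _ = NormedSpace.exp x' * (NormedSpace.exp (-y') * (NormedSpace.exp y *
            (NormedSpace.exp (-y') * NormedSpace.exp x'))) := by rw [htt]
      _ = NormedSpace.exp x' * NormedSpace.exp (-y') * NormedSpace.exp y *
            (NormedSpace.exp (-y') * NormedSpace.exp x') := by simp only [mul_assoc]


end
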